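/- For any real m×p matrix A, the principal matrix square root of I_p + AᵀA equals I_p + Aᵀ [I_m + (I_m + AAᵀ)^{1/2}]⁻¹ A. -/

import Mathlib

open Matrix

open scoped ComplexOrder in
/-- The positive semidefinite square root of a positive semidefinite matrix
(the definition `Matrix.PosSemidef.sqrt` of the older Mathlib, removed since). -/
noncomputable def Matrix.PosSemidef.sqrt {n : Type*} [Fintype n] [DecidableEq n]
    {𝕜 : Type*} [RCLike 𝕜] {A : Matrix n n 𝕜} (hA : A.PosSemidef) : Matrix n n 𝕜 :=
  hA.1.eigenvectorUnitary.1 * diagonal ((↑) ∘ (√·) ∘ hA.1.eigenvalues) *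
  (star hA.1.eigenvectorUnitary : Matrix n n 𝕜)

open scoped MatrixOrder
theorem psdSqrt_eq_cfcSqrt {n : Type*} [Fintype n] [DecidableEq n]
    {A : Matrix n n ℝ} (hA : A.PosSemidef) : hA.sqrt = CFC.sqrt A := by
  rw [CFC.sqrt_eq_real_sqrt A hA.nonneg, cfcₙ_eq_cfc, hA.1.cfc_eq]
  simp [IsHermitian.cfc, Matrix.PosSemidef.sqrt, Unitary.conjStarAlgAut_apply]
theorem Matrix.PosSemidef.posSemidef_sqrt {n : Type*} [Fintype n] [DecidableEq n]
    {A : Matrix n n ℝ} (hA : A.PosSemidef) : hA.sqrt.PosSemidef := by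
  rw [psdSqrt_eq_cfcSqrt]; exact (CFC.sqrt_nonneg A).posSemidef
theorem Matrix.PosSemidef.sqrt_mul_self {n : Type*} [Fintype n] [DecidableEq n]
    {A : Matrix n n ℝ} (hA : A.PosSemidef) : hA.sqrt * hA.sqrt = A := by
  rw [psdSqrt_eq_cfcSqrt]; exact CFC.sqrt_mul_sqrt_self A hA.nonneg
theorem Matrix.PosSemidef.eq_sqrt_of_sq_eq {n : Type*} [Fintype n] [DecidableEq n]
    {A B : Matrix n n ℝ} (hB : B.PosSemidef) (hA : A.PosSemidef) (h : B ^ 2 = A) :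
    B = hA.sqrt := by
  rw [psdSqrt_eq_cfcSqrt, ← h, CFC.sqrt_sq B hB.nonneg]



/-- Woodbury-like identity for the matrix square root: for any real `m × p` matrix `A`,
the principal square root of `I_p + AᵀA` equals
`I_p + Aᵀ [I_m + (I_m + AAᵀ)^{1/2}]⁻¹ A`. -/
theorem sqrt_one_add_transpose_mul (m p : ℕ) (A : Matrix (Fin m) (Fin p) ℝ)
    (h1 : (1 + Aᵀ * A).PosSemidef) (h2 : (1 + A * Aᵀ).PosSemidef) :
    h1.sqrt = 1 + Aᵀ * (1 + h2.sqrt)⁻¹ * A := by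
  set S := h2.sqrt with hSdef
  have hSpsd : S.PosSemidef := h2.posSemidef_sqrt
  have hS2 : S * S = 1 + A * Aᵀ := h2.sqrt_mul_self
  have hpd : (1 + S).PosDef := Matrix.PosDef.add_posSemidef Matrix.PosDef.one hSpsd
  have hdet : IsUnit (1 + S).det := isUnit_iff_ne_zero.mpr hpd.det_pos.ne'
  have hinv1 : (1 + S)⁻¹ * (1 + S) = 1 := Matrix.nonsing_inv_mul _ hdet
  have hinv2 : (1 + S) * (1 + S)⁻¹ = 1 := Matrix.mul_nonsing_inv _ hdet
  set M := (1 + S)⁻¹ with hMdef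
  have hMpsd : M.PosSemidef := hpd.inv.posSemidef
  have hBpsd : (1 + Aᵀ * M * A).PosSemidef := by
    have := hMpsd.conjTranspose_mul_mul_same A
    rw [conjTranspose_eq_transpose_of_trivial] at this
    exact Matrix.PosSemidef.add Matrix.PosSemidef.one this
  -- M * (A * Aᵀ) * M = M * (S - 1)
  have hAAT : A * Aᵀ = (S - 1) * (1 + S) := by
    have : (S - 1) * (1 + S) = S * S - 1 := by noncomm_ring
    rw [this, hS2]; abel
  have hkey : M * (A * Aᵀ) * M = M * (S - 1) := by
    rw [hAAT]
    calc M * ((S - 1) * (1 + S)) * M = M * (S - 1) * ((1 + S) * M) := by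
          simp only [Matrix.mul_assoc]
      _ = M * (S - 1) := by rw [hinv2, Matrix.mul_one]
  have hsq : (1 + Aᵀ * M * A) ^ 2 = 1 + Aᵀ * A := by
    have expand : (1 + Aᵀ * M * A) ^ 2
        = 1 + Aᵀ * M * A + Aᵀ * M * A + Aᵀ * (M * (A * Aᵀ) * M) * A := by
      simp only [pow_two, Matrix.add_mul, Matrix.mul_add, Matrix.one_mul, Matrix.mul_one,
        Matrix.mul_assoc]
      abel
    rw [expand, hkey]
    have : Aᵀ * M * A + Aᵀ * M * A + Aᵀ * (M * (S - 1)) * A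
        = Aᵀ * (M * (1 + S)) * A := by
      have h2 : M * 1 + M * 1 + M * (S - 1) = M * (1 + S) := by noncomm_ring
      calc Aᵀ * M * A + Aᵀ * M * A + Aᵀ * (M * (S - 1)) * A
          = Aᵀ * (M * 1 + M * 1 + M * (S - 1)) * A := by
            simp only [Matrix.mul_add, Matrix.add_mul, Matrix.mul_one]
        _ = Aᵀ * (M * (1 + S)) * A := by rw [h2]
    rw [add_assoc, add_assoc, ← add_assoc (Aᵀ * M * A), this, hinv1, Matrix.mul_one]
  exact ((hBpsd.eq_sqrt_of_sq_eq h1 hsq)).symm
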